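/- Let n ≥ 1 and A ∈ GL_n(ℂ) with minimal polynomial m(X) = X^p − c_{p−1}X^{p−1} − ⋯ − c_1X − c_0 of degree p, and let C_m be the companion matrix of m. Then for every vector λ = (λ_1, …, λ_p) ∈ ℂ^p one has A · (Σ_{i=1}^p λ_i·A^{−i}) = Σ_{i=1}^p (C_m·λ)_i·A^{−i}, where C_m·λ denotes the matrix–vector product. -/

import Mathlib

/-- The companion matrix of the monic polynomial
`X^p − c_{p−1}X^{p−1} − ⋯ − c_1 X − c_0` (where `c i` is the coefficient `c_i`):
its first column is `(c_{p−1}, …, c_0)ᵗ`, its `(i, i+1)` entries are `1`,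
and all other entries are `0`. -/
def companionOf (p : ℕ) (c : Fin p → ℂ) : Matrix (Fin p) (Fin p) ℂ :=
  Matrix.of fun i j : Fin p =>
    if (j : ℕ) = (i : ℕ) + 1 then 1 else if (j : ℕ) = 0 then c i.rev else 0

/-- if `A` has minimal polynomial `m = X^p − c_{p−1}X^{p−1} − ⋯ − c_0`
with companion matrix `C_m`, then for every vector `λ ∈ ℂ^p`,
`A · (Σ_{i=1}^p λ_i A^{−i}) = Σ_{i=1}^p (C_m λ)_i A^{−i}` (here zero-based: index `i : Fin p`
corresponds to the basis element `A^{−1−i}`). -/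
theorem mul_span_basis_eq_companion_mulVec (n : ℕ) (hn : 1 ≤ n)
    (A : Matrix (Fin n) (Fin n) ℂ) (hA : IsUnit A) (p : ℕ) (hp : 1 ≤ p)
    (c : Fin p → ℂ)
    (hm : minpoly ℂ A =
      Polynomial.X ^ p - ∑ i : Fin p, Polynomial.C (c i) * Polynomial.X ^ (i : ℕ))
    (lam : Fin p → ℂ) :
    A * (∑ i : Fin p, lam i • A ^ (-1 - (i : ℤ))) =
      ∑ i : Fin p, (companionOf p c).mulVec lam i • A ^ (-1 - (i : ℤ)) := by
  obtain ⟨q, rfl⟩ : ∃ q, p = q + 1 := ⟨p - 1, (Nat.succ_pred_eq_of_pos hp).symm⟩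
  have hdet : IsUnit A.det := (Matrix.isUnit_iff_isUnit_det A).mp hA
  -- LHS simplification
  have hpow : ∀ i : Fin (q + 1), A * A ^ (-1 - (i : ℤ)) = A ^ (-(i : ℤ)) := by
    intro i
    calc A * A ^ (-1 - (i : ℤ)) = A ^ (1 : ℤ) * A ^ (-1 - (i : ℤ)) := by rw [zpow_one]
    _ = A ^ (1 + (-1 - (i : ℤ))) := (Matrix.zpow_add hdet 1 (-1 - (i : ℤ))).symm
    _ = A ^ (-(i : ℤ)) := by congr 1; ring
  rw [Finset.mul_sum]
  simp_rw [Matrix.mul_smul, hpow]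
  -- Minimal polynomial identity for `A ^ (q+1)`
  have hApow : A ^ (q + 1) = ∑ i : Fin (q + 1), c i • A ^ (i : ℕ) := by
    have h0 := minpoly.aeval ℂ A
    rw [hm] at h0
    simpa [map_sub, map_pow, map_sum, map_mul, Polynomial.aeval_X, Polynomial.aeval_C,
      sub_eq_zero, Algebra.smul_def] using h0
  -- `1 = ∑ c i • A ^ (i - (q+1))`
  have hone : (1 : Matrix (Fin n) (Fin n) ℂ) =
      ∑ i : Fin (q + 1), c i • A ^ ((i : ℤ) - (q + 1)) := by
    have h1 : (1 : Matrix (Fin n) (Fin n) ℂ) =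
        A ^ (((q + 1 : ℕ) : ℤ)) * A ^ (-((q + 1 : ℕ) : ℤ)) := by
      rw [← Matrix.zpow_add hdet, add_neg_cancel, zpow_zero]
    rw [zpow_natCast, hApow, Finset.sum_mul] at h1
    rw [h1]
    refine Finset.sum_congr rfl fun i _ => ?_
    rw [Matrix.smul_mul, ← zpow_natCast A (i : ℕ), ← Matrix.zpow_add hdet]
    have he : ((i : ℕ) : ℤ) + -((q + 1 : ℕ) : ℤ) = (i : ℤ) - (q + 1) := by push_cast; ring
    rw [he]
  -- reindexed via `Fin.rev`
  have hrev : (1 : Matrix (Fin n) (Fin n) ℂ) =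
      ∑ i : Fin (q + 1), c i.rev • A ^ (-1 - (i : ℤ)) := by
    rw [hone]
    refine Fintype.sum_bijective Fin.rev Fin.rev_bijective _ _ fun i => ?_
    rw [Fin.rev_rev]
    congr 2
    have hi : (i : ℕ) + 1 ≤ q + 1 := i.is_lt
    rw [Fin.val_rev]
    have hi2 : (i : ℕ) ≤ q := by omega
    push_cast [Nat.cast_sub hi2]
    ring_nf
  -- computing the matrix-vector product entries
  have hmv : ∀ i : Fin (q + 1), (companionOf (q + 1) c).mulVec lam i =
      (if h : (i : ℕ) + 1 < q + 1 then lam ⟨(i : ℕ) + 1, h⟩ else 0) + c i.rev * lam 0 := by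
    intro i
    have : (companionOf (q + 1) c).mulVec lam i =
        ∑ j : Fin (q + 1),
          (if (j : ℕ) = (i : ℕ) + 1 then 1 else if (j : ℕ) = 0 then c i.rev else 0) * lam j := by
      simp [companionOf, Matrix.mulVec, dotProduct]
    rw [this]
    have hsplit : ∀ j : Fin (q + 1),
        (if (j : ℕ) = (i : ℕ) + 1 then 1 else if (j : ℕ) = 0 then c i.rev else 0) * lam j =
        (if (j : ℕ) = (i : ℕ) + 1 then lam j else 0) +
          (if (j : ℕ) = 0 then c i.rev * lam j else 0) := by
      intro j
      split_ifs with h1 h2 <;> first | omega | ring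
    rw [Finset.sum_congr rfl fun j _ => hsplit j, Finset.sum_add_distrib]
    congr 1
    · by_cases h : (i : ℕ) + 1 < q + 1
      · rw [dif_pos h]
        have : ∀ j : Fin (q + 1), ((j : ℕ) = (i : ℕ) + 1) = (j = ⟨(i : ℕ) + 1, h⟩) := by
          intro j; simp [Fin.ext_iff]
        simp_rw [this]
        simp [Finset.sum_ite_eq']
      · rw [dif_neg h]
        refine Finset.sum_eq_zero fun j _ => ?_
        rw [if_neg]
        have := j.is_lt
        omega
    · have : ∀ j : Fin (q + 1), ((j : ℕ) = 0) = (j = (0 : Fin (q + 1))) := by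
        intro j; exact propext Fin.val_eq_zero_iff
      simp_rw [this]
      simp [Finset.sum_ite_eq']
  -- assemble the right-hand side
  simp_rw [hmv, add_smul, Finset.sum_add_distrib]
  have h2 : ∑ i : Fin (q + 1), (c i.rev * lam 0) • A ^ (-1 - (i : ℤ)) =
      lam 0 • (1 : Matrix (Fin n) (Fin n) ℂ) := by
    rw [hrev, Finset.smul_sum]
    refine Finset.sum_congr rfl fun i _ => ?_
    rw [smul_smul, mul_comm]
  rw [h2]
  have h1 : ∑ i : Fin (q + 1),
      (if h : (i : ℕ) + 1 < q + 1 then lam ⟨(i : ℕ) + 1, h⟩ else 0) • A ^ (-1 - (i : ℤ)) =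
      ∑ j : Fin q, lam j.succ • A ^ (-(j.succ : ℤ)) := by
    rw [Fin.sum_univ_castSucc]
    have hlast : (if h : ((Fin.last q : Fin (q + 1)) : ℕ) + 1 < q + 1 then
        lam ⟨((Fin.last q : Fin (q + 1)) : ℕ) + 1, h⟩ else 0) = 0 := by
      rw [dif_neg]; simp [Fin.last]
    rw [hlast, zero_smul, add_zero]
    refine Finset.sum_congr rfl fun j _ => ?_
    have hj : ((j.castSucc : Fin (q + 1)) : ℕ) + 1 < q + 1 := by
      simpa using j.is_lt
    rw [dif_pos hj]
    have hje : (⟨((j.castSucc : Fin (q + 1)) : ℕ) + 1, hj⟩ : Fin (q + 1)) = j.succ := by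
      simp [Fin.ext_iff]
    rw [hje]
    congr 1
    push_cast [Fin.val_succ, Fin.coe_castSucc]
    ring
  rw [h1]
  rw [Fin.sum_univ_succ (fun i : Fin (q + 1) => lam i • A ^ (-(i : ℤ)))]
  simp only [Fin.val_zero, Nat.cast_zero, neg_zero, zpow_zero]
  exact add_comm _ _
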